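/- arXiv:1311.2436 — 2 statements merged into one kernel-verified Lean document; each statement's English description precedes it below -/
import Mathlib

section
/- Let H : ℝ^{2n} → ℝ be a C² function and A a skew-symmetric real n×n matrix such that H(exp(sρ(A))w) = H(w) for all s ∈ ℝ and w ∈ ℝ^{2n}, where ρ(A) := diag(A,A). Let z ∈ ℝ^{2n} and let γ : ℝ → ℝ^{2n} satisfy γ(0) = z and γ′(t) = J∇H(γ(t)) for all t. If J∇H(z) = ρ(A)z, then γ(t) = exp(tρ(A))z for all t ∈ ℝ; in particular, if moreover exp(tA) ∈ G for all t for a subgroup G of O(n) acting by ρ(g)(x,ξ) = (gx,gξ), then the whole trajectory of z is contained in the group orbit Gz = {ρ(g)z : g ∈ G}. -/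
open scoped RealInnerProductSpace Matrix

noncomputable section

/-- Phase space `ℝ^{2n} = ℝⁿ × ℝⁿ`. -/
abbrev Vn (n : ℕ) := EuclideanSpace ℝ (Fin n ⊕ Fin n)

/-- The standard symplectic matrix `J = [[0, I], [-I, 0]]`. -/
def JM (n : ℕ) : Matrix (Fin n ⊕ Fin n) (Fin n ⊕ Fin n) ℝ :=
  Matrix.fromBlocks 0 1 (-1) 0

/-- The lifted (block diagonal) action `ρ(A) = diag(A, A)` of an `n × n` matrix. -/
def rhoM {n : ℕ} (A : Matrix (Fin n) (Fin n) ℝ) :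
    Matrix (Fin n ⊕ Fin n) (Fin n ⊕ Fin n) ℝ :=
  Matrix.fromBlocks A 0 0 A

/-- Action of a `2n × 2n` matrix on phase space. -/
def act {n : ℕ} (M : Matrix (Fin n ⊕ Fin n) (Fin n ⊕ Fin n) ℝ) : Vn n →ₗ[ℝ] Vn n :=
  Matrix.toEuclideanLin M

attribute [local instance] Matrix.linftyOpNormedAddCommGroup Matrix.linftyOpNormedRing
  Matrix.linftyOpNormedAlgebra

namespace TrajAux

variable {n : ℕ}

lemma act_mul (M N : Matrix (Fin n ⊕ Fin n) (Fin n ⊕ Fin n) ℝ) (w : Vn n) :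
    act (M * N) w = act M (act N w) := by
  simp [act, Matrix.toEuclideanLin_apply, Matrix.mulVec_mulVec]

lemma act_one (w : Vn n) : act (1 : Matrix (Fin n ⊕ Fin n) (Fin n ⊕ Fin n) ℝ) w = w := by
  simp [act, Matrix.toEuclideanLin_apply]

lemma inner_act (M : Matrix (Fin n ⊕ Fin n) (Fin n ⊕ Fin n) ℝ) (x y : Vn n) :
    ⟪act M x, y⟫ = ⟪x, act Mᵀ y⟫ := by
  simp only [act, Matrix.toEuclideanLin_apply, PiLp.inner_apply, RCLike.inner_apply,
    starRingEnd_apply, star_trivial]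
  have h := Matrix.dotProduct_mulVec ((WithLp.equiv 2 _) x) Mᵀ ((WithLp.equiv 2 _) y)
  rw [Matrix.vecMul_transpose] at h
  simpa [dotProduct, mul_comm] using h.symm

/-- `ρ` as a ring homomorphism. -/
def rhoHom (n : ℕ) : Matrix (Fin n) (Fin n) ℝ →+* Matrix (Fin n ⊕ Fin n) (Fin n ⊕ Fin n) ℝ where
  toFun := rhoM
  map_one' := by simp [rhoM, ← Matrix.fromBlocks_one]
  map_mul' A B := by simp [rhoM, Matrix.fromBlocks_multiply]
  map_zero' := by simp [rhoM]
  map_add' A B := by simp [rhoM, Matrix.fromBlocks_add]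

/-- `ρ` as a linear map. -/
def rhoLin (n : ℕ) : Matrix (Fin n) (Fin n) ℝ →ₗ[ℝ] Matrix (Fin n ⊕ Fin n) (Fin n ⊕ Fin n) ℝ where
  toFun := rhoM
  map_add' A B := by simp [rhoM, Matrix.fromBlocks_add]
  map_smul' c A := by simp [rhoM, Matrix.fromBlocks_smul]

lemma continuous_rhoM : Continuous (rhoM (n := n)) :=
  (rhoLin n).continuous_of_finiteDimensional

lemma exp_rho (A : Matrix (Fin n) (Fin n) ℝ) (t : ℝ) :
    NormedSpace.exp (t • rhoM A) = rhoM (NormedSpace.exp (t • A)) := by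
  have h1 : t • rhoM A = rhoHom n (t • A) := by
    simp [rhoHom, rhoM, Matrix.fromBlocks_smul]; rfl
  rw [h1]; refine (NormedSpace.map_exp (rhoHom n) continuous_rhoM _).symm.trans ?_
  rfl

lemma rho_transpose (A : Matrix (Fin n) (Fin n) ℝ) : (rhoM A)ᵀ = rhoM Aᵀ := by
  simp [rhoM, Matrix.fromBlocks_transpose]

/-- `act M z` as a linear map in `M`. -/
def actz (z : Vn n) : Matrix (Fin n ⊕ Fin n) (Fin n ⊕ Fin n) ℝ →ₗ[ℝ] Vn n where
  toFun M := act M z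
  map_add' M N := by simp [act, map_add]
  map_smul' c M := by simp [act, map_smul]

lemma J_comm_rho (A : Matrix (Fin n) (Fin n) ℝ) : Commute (JM n) (rhoM A) := by
  show _ = _
  simp [JM, rhoM, Matrix.fromBlocks_multiply]

end TrajAux

open TrajAux in
theorem trajectory_of_relatively_stationary_point {n : ℕ}
    (H : Vn n → ℝ) (hH : ContDiff ℝ 2 H)
    (A : Matrix (Fin n) (Fin n) ℝ) (hA : Aᵀ = -A)
    (hHinv : ∀ (s : ℝ) (w : Vn n), H (act (NormedSpace.exp (s • rhoM A)) w) = H w)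
    (z : Vn n) (γ : ℝ → Vn n) (hγ0 : γ 0 = z)
    (hγode : ∀ t : ℝ, HasDerivAt γ (act (JM n) (gradient H (γ t))) t)
    (hz : act (JM n) (gradient H z) = act (rhoM A) z) :
    (∀ t : ℝ, γ t = act (NormedSpace.exp (t • rhoM A)) z) ∧
    (∀ G : Set (Matrix (Fin n) (Fin n) ℝ),
      (∀ g ∈ G, g ∈ Matrix.orthogonalGroup (Fin n) ℝ) →
      (1 : Matrix (Fin n) (Fin n) ℝ) ∈ G →
      (∀ g ∈ G, ∀ g' ∈ G, g * g' ∈ G) →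
      (∀ g ∈ G, g⁻¹ ∈ G) →
      (∀ t : ℝ, NormedSpace.exp (t • A) ∈ G) →
      ∀ t : ℝ, ∃ g ∈ G, γ t = act (rhoM g) z) := by
  classical
  set E : ℝ → Matrix (Fin n ⊕ Fin n) (Fin n ⊕ Fin n) ℝ :=
    fun s => NormedSpace.exp (s • rhoM A) with hE
  -- skewness of the lifted matrix
  have hskew : (rhoM A)ᵀ = -(rhoM A) := by
    rw [rho_transpose, hA]; simp [rhoM, Matrix.fromBlocks_neg]
  -- orthogonality of E s
  have hEt : ∀ s : ℝ, (E s)ᵀ = NormedSpace.exp (-(s • rhoM A)) := by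
    intro s
    rw [hE, ← Matrix.exp_transpose]
    congr 1
    rw [Matrix.transpose_smul, hskew, smul_neg]
  have hEinv1 : ∀ s : ℝ, (E s)ᵀ * E s = 1 := by
    intro s
    rw [hEt s, hE]; dsimp only; rw [← Matrix.exp_add_of_commute (-(s • rhoM A)) (s • rhoM A) (Commute.neg_left rfl)]
    simp
  have hEinv2 : ∀ s : ℝ, E s * (E s)ᵀ = 1 := by
    intro s
    rw [hEt s, hE]; dsimp only; rw [← Matrix.exp_add_of_commute (s • rhoM A) (-(s • rhoM A)) (Commute.neg_right rfl)]
    simp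
  have hHdiff : Differentiable ℝ H := hH.differentiable (by norm_num)
  -- the action as a continuous linear map
  let actC : Matrix (Fin n ⊕ Fin n) (Fin n ⊕ Fin n) ℝ → Vn n →L[ℝ] Vn n :=
    fun M => LinearMap.toContinuousLinearMap (act M)
  have actC_apply : ∀ M w, actC M w = act M w := fun _ _ => rfl
  -- key inner-product identity for gradients
  have inner_grad : ∀ (x : Vn n) (u : Vn n), ⟪gradient H x, u⟫ = fderiv ℝ H x u := by
    intro x u
    simpa [gradient] using (InnerProductSpace.toDual_symm_apply
      (𝕜 := ℝ) (E := Vn n) (x := u) (y := fderiv ℝ H x))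
  -- equivariance of the gradient
  have hgrad : ∀ (s : ℝ) (w : Vn n),
      gradient H (act (E s) w) = act (E s) (gradient H w) := by
    intro s w
    have hcomp : HasFDerivAt (fun v => H (actC (E s) v))
        ((fderiv ℝ H (act (E s) w)).comp (actC (E s))) w :=
      (hHdiff (act (E s) w)).hasFDerivAt.comp w (actC (E s)).hasFDerivAt
    have hfun : (fun v => H (actC (E s) v)) = H := by
      funext v; exact hHinv s v
    rw [hfun] at hcomp
    have hfd : fderiv ℝ H w = (fderiv ℝ H (act (E s) w)).comp (actC (E s)) :=
      hcomp.fderiv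
    have key : ∀ u : Vn n, ⟪gradient H w, u⟫ = ⟪(E s)ᵀ.toEuclideanLin (gradient H (act (E s) w)), u⟫ := by
      intro u
      rw [inner_grad, hfd]
      have : (fderiv ℝ H (act (E s) w)).comp (actC (E s)) u
          = fderiv ℝ H (act (E s) w) (act (E s) u) := rfl
      rw [this, ← inner_grad]
      rw [real_inner_comm, inner_act, real_inner_comm]
      rfl
    have heq : gradient H w = act (E s)ᵀ (gradient H (act (E s) w)) :=
      ext_inner_right ℝ (fun u => key u)
    rw [heq, ← act_mul, hEinv2 s, act_one]
  -- commutation of J with E s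
  have hJE : ∀ s : ℝ, Commute (JM n) (E s) := by
    intro s
    exact ((J_comm_rho A).smul_right s).exp_right
  -- the comparison trajectory
  set σ : ℝ → Vn n := fun t => act (E t) z with hσ
  have hσode : ∀ t : ℝ, HasDerivAt σ (act (JM n) (gradient H (σ t))) t := by
    intro t
    have h1 : HasDerivAt E (E t * rhoM A) t := hasDerivAt_exp_smul_const (rhoM A) t
    have h2 : HasDerivAt σ ((actz z) (E t * rhoM A)) t := by
      have := (LinearMap.toContinuousLinearMap (actz z)).hasFDerivAt.comp_hasDerivAt t h1
      exact this
    have h3 : (actz z) (E t * rhoM A) = act (JM n) (gradient H (σ t)) := by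
      show act (E t * rhoM A) z = _
      rw [hσ]
      rw [hgrad t z]
      calc act (E t * rhoM A) z = act (E t) (act (rhoM A) z) := act_mul _ _ _
        _ = act (E t) (act (JM n) (gradient H z)) := by rw [hz]
        _ = act (E t * JM n) (gradient H z) := (act_mul _ _ _).symm
        _ = act (JM n * E t) (gradient H z) := by rw [(hJE t).eq]
        _ = act (JM n) (act (E t) (gradient H z)) := act_mul _ _ _
    rw [← h3]; exact h2
  have hσ0 : σ 0 = z := by
    rw [hσ]
    simp only [hE, zero_smul, NormedSpace.exp_zero]
    exact act_one z
  -- the vector field is C¹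
  have hvf : ContDiff ℝ 1 (fun x => act (JM n) (gradient H x)) := by
    have h1 : ContDiff ℝ 1 (fderiv ℝ H) := hH.fderiv_right (by norm_num)
    have h2 : ContDiff ℝ 1 (gradient H) := by
      have := ((InnerProductSpace.toDual ℝ (Vn n)).symm.toContinuousLinearEquiv
        : StrongDual ℝ (Vn n) ≃L[ℝ] Vn n).contDiff.comp h1
      exact this
    exact (actC (JM n)).contDiff.comp h2
  -- uniqueness of solutions: closed-open argument
  have main : ∀ t : ℝ, γ t = σ t := by
    have hγc : Continuous γ := by
      rw [continuous_iff_continuousAt]; exact fun t => (hγode t).continuousAt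
    have hσc : Continuous σ := by
      rw [continuous_iff_continuousAt]; exact fun t => (hσode t).continuousAt
    set S : Set ℝ := {t | γ t = σ t} with hS
    have hclosed : IsClosed S := isClosed_eq hγc hσc
    have hopen : IsOpen S := by
      rw [isOpen_iff_mem_nhds]
      intro t₀ ht₀
      obtain ⟨K, u, hu, hlip⟩ :=
        (hvf.contDiffAt (x := γ t₀)).exists_lipschitzOnWith
      have hev : γ =ᶠ[nhds t₀] σ := by
        apply ODE_solution_unique_of_eventually
          (v := fun _ x => act (JM n) (gradient H x)) (s := fun _ => u)
          (Filter.Eventually.of_forall fun _ => hlip)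
        · have h1 : ∀ᶠ t in nhds t₀, γ t ∈ u :=
            hγc.continuousAt.preimage_mem_nhds hu
          filter_upwards [h1] with t ht using ⟨hγode t, ht⟩
        · have h2 : ∀ᶠ t in nhds t₀, σ t ∈ u := by
            apply hσc.continuousAt.preimage_mem_nhds
            rw [← ht₀]; exact hu
          filter_upwards [h2] with t ht using ⟨hσode t, ht⟩
        · exact ht₀
      exact hev.mono (fun t h => h)
    have hne : (0 : ℝ) ∈ S := by rw [hS]; simp only [Set.mem_setOf_eq]; rw [hγ0, hσ0]
    have : S = Set.univ := IsClopen.eq_univ ⟨hclosed, hopen⟩ ⟨0, hne⟩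
    intro t
    have : t ∈ S := this ▸ Set.mem_univ t
    exact this
  refine ⟨main, ?_⟩
  intro G _ _ _ _ hGexp t
  refine ⟨NormedSpace.exp (t • A), hGexp t, ?_⟩
  rw [main t]
  show act (NormedSpace.exp (t • rhoM A)) z = _
  rw [exp_rho]

end
end

section
/- Let G be a subgroup of O(n), 𝔩 := {A : A skew-symmetric real n×n matrix with exp(tA) ∈ G for all t ∈ ℝ}, Ω₀ := {z ∈ ℝ^{2n} : ⟨z, Jρ(A)z⟩ = 0 for all A ∈ 𝔩}, and let H : ℝ^{2n} → ℝ be differentiable and G-invariant (H∘ρ(g) = H for all g ∈ G). Then for every z ∈ Ω₀ the subspaces V₁ := ℝ·∇H(z) + J𝔤z and V₂ := ℝ·J∇H(z) + 𝔤z of ℝ^{2n} are Euclidean-orthogonal: ⟨v₁, v₂⟩ = 0 for all v₁ ∈ V₁ and v₂ ∈ V₂, where 𝔤z := span{ρ(A)z : A ∈ 𝔩}. -/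
open scoped RealInnerProductSpace Matrix

noncomputable section

/-- The Lie algebra `𝔩` of `G`. -/
def lieAlg {n : ℕ} (G : Set (Matrix (Fin n) (Fin n) ℝ)) : Set (Matrix (Fin n) (Fin n) ℝ) :=
  {A | Aᵀ = -A ∧ ∀ t : ℝ, NormedSpace.exp (t • A) ∈ G}

/-- The zero level `Ω₀` of the momentum map. -/
def Omega0 {n : ℕ} (G : Set (Matrix (Fin n) (Fin n) ℝ)) : Set (Vn n) :=
  {z | ∀ A ∈ lieAlg G, ⟪z, act (JM n) (act (rhoM A) z)⟫ = 0}

/-- The infinitesimal orbit directions `𝔤z = span {ρ(A)z : A ∈ 𝔩}`. -/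
def gSp {n : ℕ} (G : Set (Matrix (Fin n) (Fin n) ℝ)) (z : Vn n) : Submodule ℝ (Vn n) :=
  Submodule.span ℝ {v | ∃ A ∈ lieAlg G, v = act (rhoM A) z}

-- ### auxiliary lemmas

attribute [local instance] Matrix.linftyOpNormedRing Matrix.linftyOpNormedAlgebra

open NormedSpace

variable {n : ℕ}

lemma rhoM_add (A B : Matrix (Fin n) (Fin n) ℝ) : rhoM (A + B) = rhoM A + rhoM B := by
  ext (i | i) (j | j) <;> simp [rhoM]

lemma rhoM_smul (c : ℝ) (A : Matrix (Fin n) (Fin n) ℝ) : rhoM (c • A) = c • rhoM A := by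
  ext (i | i) (j | j) <;> simp [rhoM]

lemma rhoM_neg (A : Matrix (Fin n) (Fin n) ℝ) : rhoM (-A) = -rhoM A := by
  ext (i | i) (j | j) <;> simp [rhoM]

lemma rhoM_mul (A B : Matrix (Fin n) (Fin n) ℝ) : rhoM A * rhoM B = rhoM (A * B) := by
  simp [rhoM, Matrix.fromBlocks_multiply]

lemma rhoM_one : rhoM (1 : Matrix (Fin n) (Fin n) ℝ) = 1 := by
  simp [rhoM, Matrix.fromBlocks_one]

lemma rhoM_transpose (A : Matrix (Fin n) (Fin n) ℝ) : (rhoM A)ᵀ = rhoM Aᵀ := by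
  simp [rhoM, Matrix.fromBlocks_transpose]

lemma JM_transpose : (JM n)ᵀ = -(JM n) := by
  ext (i | i) (j | j) <;> simp [JM, Matrix.one_apply, eq_comm]

lemma JM_mul_JM : JM n * JM n = -1 := by
  ext (i | i) (j | j) <;> simp [JM, Matrix.fromBlocks_multiply, Matrix.one_apply]

lemma rhoM_JM_comm (A : Matrix (Fin n) (Fin n) ℝ) : rhoM A * JM n = JM n * rhoM A := by
  simp [rhoM, JM, Matrix.fromBlocks_multiply]

lemma act_mul (M N : Matrix (Fin n ⊕ Fin n) (Fin n ⊕ Fin n) ℝ) (x : Vn n) :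
    act (M * N) x = act M (act N x) := by
  simp only [act, Matrix.toEuclideanLin_eq_toLin]
  rw [Matrix.toLin_mul (PiLp.basisFun 2 ℝ (Fin n ⊕ Fin n)) (PiLp.basisFun 2 ℝ (Fin n ⊕ Fin n))]
  rfl

lemma act_one (x : Vn n) : act (1 : Matrix (Fin n ⊕ Fin n) (Fin n ⊕ Fin n) ℝ) x = x := by
  simp only [act, Matrix.toEuclideanLin_eq_toLin, Matrix.toLin_one]
  rfl

lemma inner_act (M : Matrix (Fin n ⊕ Fin n) (Fin n ⊕ Fin n) ℝ) (x y : Vn n) :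
    ⟪act M x, y⟫ = ⟪x, act Mᵀ y⟫ := by
  have h : Mᴴ = Mᵀ := by ext i j; simp [Matrix.conjTranspose_apply]
  rw [← h, act, act, Matrix.toEuclideanLin_conjTranspose_eq_adjoint,
    LinearMap.adjoint_inner_right]

lemma inner_act_JM_self (x : Vn n) : ⟪x, act (JM n) x⟫ = 0 := by
  have h1 : ⟪act (JM n) x, x⟫ = ⟪x, act (JM n)ᵀ x⟫ := inner_act _ _ _
  rw [JM_transpose] at h1
  have h2 : act (-(JM n)) x = -(act (JM n) x) := by
    rw [act, map_neg]; rfl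
  rw [h2, inner_neg_right, real_inner_comm x (act (JM n) x)] at h1
  linarith [h1]

lemma span_apply_zero {S : Set (Vn n)} (f : Vn n →ₗ[ℝ] ℝ) (h : ∀ s ∈ S, f s = 0) :
    ∀ w ∈ Submodule.span ℝ S, f w = 0 := fun w hw =>
  LinearMap.mem_ker.mp
    (Submodule.span_le.mpr (fun s hs => LinearMap.mem_ker.mpr (h s hs)) hw)

/-- the conjugated generator `exp(tB) A exp(-tB)` stays in the Lie algebra. -/
lemma conj_mem_lieAlg {G : Set (Matrix (Fin n) (Fin n) ℝ)}
    (hGmul : ∀ g ∈ G, ∀ g' ∈ G, g * g' ∈ G)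
    {A B : Matrix (Fin n) (Fin n) ℝ} (hA : A ∈ lieAlg G) (hB : B ∈ lieAlg G) (t : ℝ) :
    (exp (t • B) * A * exp (t • (-B))) ∈ lieAlg G := by
  have hcomm : Commute (t • B) (t • (-B)) :=
    (((Commute.refl B).neg_right).smul_left t).smul_right t
  have hEF : exp (t • B) * exp (t • (-B)) = 1 := by
    rw [← Matrix.exp_add_of_commute _ _ hcomm]
    simp [smul_neg]
  have hFE : exp (t • (-B)) * exp (t • B) = 1 := by
    rw [← Matrix.exp_add_of_commute _ _ hcomm.symm]
    simp [smul_neg]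
  have hFmem : exp (t • (-B)) ∈ G := by
    have : t • (-B) = (-t) • B := by rw [smul_neg, neg_smul]
    rw [this]; exact hB.2 (-t)
  constructor
  · -- skew-symmetry
    have hEt : (exp (t • B))ᵀ = exp (t • (-B)) := by
      rw [← Matrix.exp_transpose]
      congr 1
      rw [Matrix.transpose_smul, hB.1]
    have hFt : (exp (t • (-B)))ᵀ = exp (t • B) := by
      rw [← Matrix.exp_transpose]
      congr 1
      rw [Matrix.transpose_smul, Matrix.transpose_neg, hB.1, neg_neg]
    rw [Matrix.transpose_mul, Matrix.transpose_mul, hEt, hFt, hA.1]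
    simp [mul_neg, neg_mul, mul_assoc]
  · intro s
    set u : (Matrix (Fin n) (Fin n) ℝ)ˣ :=
      ⟨exp (t • B), exp (t • (-B)), hEF, hFE⟩ with hu
    have hscale : s • (exp (t • B) * A * exp (t • (-B)))
        = (u : Matrix (Fin n) (Fin n) ℝ) * (s • A) * ((u⁻¹ : (Matrix (Fin n) (Fin n) ℝ)ˣ) : Matrix (Fin n) (Fin n) ℝ) := by
      show _ = exp (t • B) * (s • A) * exp (t • (-B))
      rw [mul_smul_comm, smul_mul_assoc]
    rw [hscale, Matrix.exp_units_conj u (s • A)]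
    exact hGmul _ (hGmul _ (hB.2 t) _ (hA.2 s)) _ hFmem

/-- the momentum-map vanishing extends to products of Lie algebra elements. -/
lemma momentum_mul_zero {G : Set (Matrix (Fin n) (Fin n) ℝ)}
    (hGmul : ∀ g ∈ G, ∀ g' ∈ G, g * g' ∈ G)
    {z : Vn n} (hz : z ∈ Omega0 G) {A B : Matrix (Fin n) (Fin n) ℝ}
    (hA : A ∈ lieAlg G) (hB : B ∈ lieAlg G) :
    ⟪z, act (JM n) (act (rhoM (A * B)) z)⟫ = 0 := by
  classical
  set qL : Matrix (Fin n) (Fin n) ℝ →ₗ[ℝ] ℝ :=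
    { toFun := fun M => ⟪z, act (JM n) (act (rhoM M) z)⟫
      map_add' := by
        intro M N
        simp only [rhoM_add]
        rw [show act (rhoM M + rhoM N) z = act (rhoM M) z + act (rhoM N) z by
          rw [act, map_add]; rfl]
        rw [map_add, inner_add_right]
      map_smul' := by
        intro c M
        simp only [rhoM_smul, RingHom.id_apply]
        rw [show act (c • rhoM M) z = c • act (rhoM M) z by
          rw [act, map_smul]; rfl]
        rw [map_smul, real_inner_smul_right]
        rfl } with hqL
  have hq0 : ∀ C ∈ lieAlg G, qL C = 0 := fun C hC => hz C hC
  -- antisymmetry under transpose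
  have hqT : ∀ M : Matrix (Fin n) (Fin n) ℝ, qL Mᵀ = - qL M := by
    intro M
    have e1 : qL Mᵀ = ⟪z, act (JM n * rhoM Mᵀ) z⟫ := by
      show ⟪z, act (JM n) (act (rhoM Mᵀ) z)⟫ = _
      rw [act_mul]
    have e2 : JM n * rhoM Mᵀ = (rhoM M)ᵀ * JM n := by
      rw [rhoM_transpose, rhoM_JM_comm]
    have e3 : ⟪z, act ((rhoM M)ᵀ * JM n) z⟫ = ⟪act (rhoM M) z, act (JM n) z⟫ := by
      rw [act_mul, ← inner_act]
    have e4 : ⟪act (rhoM M) z, act (JM n) z⟫ = ⟪act (JM n)ᵀ (act (rhoM M) z), z⟫ := by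
      rw [inner_act ((JM n)ᵀ) (act (rhoM M) z) z, Matrix.transpose_transpose]
    have e5 : act (JM n)ᵀ (act (rhoM M) z) = -(act (JM n) (act (rhoM M) z)) := by
      rw [JM_transpose, act, map_neg]; rfl
    rw [e1, e2, e3, e4, e5, inner_neg_left, real_inner_comm]
    rfl
  -- derivative of the conjugated curve
  have h1 : HasDerivAt (fun t : ℝ => exp (t • B)) B 0 := by
    have := hasDerivAt_exp_smul_const B (0 : ℝ)
    simp only [zero_smul, exp_zero, one_mul] at this
    exact this
  have h2 : HasDerivAt (fun t : ℝ => exp (t • (-B))) (-B) 0 := by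
    have := hasDerivAt_exp_smul_const (-B) (0 : ℝ)
    simp only [zero_smul, exp_zero, one_mul] at this
    exact this
  have hm : HasDerivAt (fun t : ℝ => exp (t • B) * A * exp (t • (-B)))
      (B * A - A * B) 0 := by
    have := (h1.mul_const A).mul h2
    simp only [zero_smul, exp_zero, one_mul, mul_one, mul_neg, sub_eq_add_neg] at this
    exact this
  set qC := LinearMap.toContinuousLinearMap qL with hqC
  have hd1 : HasDerivAt (fun t : ℝ => qC (exp (t • B) * A * exp (t • (-B))))
      (qC (B * A - A * B)) 0 :=
    qC.hasFDerivAt.comp_hasDerivAt 0 hm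
  have heq : (fun t : ℝ => qC (exp (t • B) * A * exp (t • (-B)))) = fun _ => (0 : ℝ) := by
    funext t
    exact hq0 _ (conj_mem_lieAlg hGmul hA hB t)
  rw [heq] at hd1
  have hBAAB : qL (B * A - A * B) = 0 := hd1.unique (hasDerivAt_const 0 0)
  have hBA : qL (B * A) = qL (A * B) := by
    have := map_sub qL (B * A) (A * B)
    rw [hBAAB] at this
    linarith [this.symm]
  have hT : qL (B * A) = - qL (A * B) := by
    have : (A * B)ᵀ = B * A := by
      rw [Matrix.transpose_mul, hA.1, hB.1, neg_mul_neg]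
    rw [← this, hqT]
  have : qL (A * B) = 0 := by linarith [hBA, hT]
  exact this

lemma inner_gradient (H : Vn n → ℝ) (z v : Vn n) :
    ⟪gradient H z, v⟫ = fderiv ℝ H z v := by
  unfold gradient
  exact InnerProductSpace.toDual_symm_apply

lemma grad_inner_orbit {G : Set (Matrix (Fin n) (Fin n) ℝ)}
    (H : Vn n → ℝ) (hH : Differentiable ℝ H)
    (hHinv : ∀ g ∈ G, ∀ z : Vn n, H (act (rhoM g) z) = H z) (z : Vn n)
    {A : Matrix (Fin n) (Fin n) ℝ} (hA : A ∈ lieAlg G) :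
    ⟪gradient H z, act (rhoM A) z⟫ = 0 := by
  classical
  set L : Matrix (Fin n) (Fin n) ℝ →ₗ[ℝ] Vn n :=
    { toFun := fun M => act (rhoM M) z
      map_add' := by
        intro M N
        simp only [rhoM_add]
        rw [act, map_add]; rfl
      map_smul' := by
        intro c M
        simp only [rhoM_smul, RingHom.id_apply]
        rw [act, map_smul]; rfl } with hL
  set LC := LinearMap.toContinuousLinearMap L with hLC
  have h1 : HasDerivAt (fun t : ℝ => NormedSpace.exp (t • A)) A 0 := by
    have := hasDerivAt_exp_smul_const A (0 : ℝ)
    simp only [zero_smul, exp_zero, one_mul] at this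
    exact this
  have hc : HasDerivAt (fun t : ℝ => LC (NormedSpace.exp (t • A))) (LC A) 0 :=
    LC.hasFDerivAt.comp_hasDerivAt 0 h1
  have hc0 : LC (NormedSpace.exp ((0 : ℝ) • A)) = z := by
    show act (rhoM (NormedSpace.exp ((0 : ℝ) • A))) z = z
    rw [zero_smul, exp_zero, rhoM_one, act_one]
  have hfd : HasFDerivAt H (fderiv ℝ H z) (LC (NormedSpace.exp ((0 : ℝ) • A))) := by
    rw [hc0]; exact (hH z).hasFDerivAt
  have hHc : HasDerivAt (fun t : ℝ => H (LC (NormedSpace.exp (t • A))))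
      (fderiv ℝ H z (LC A)) 0 := hfd.comp_hasDerivAt 0 hc
  have heq : (fun t : ℝ => H (LC (NormedSpace.exp (t • A)))) = fun _ => H z := by
    funext t
    show H (act (rhoM (NormedSpace.exp (t • A))) z) = H z
    exact hHinv _ (hA.2 t) z
  rw [heq] at hHc
  have hzero : fderiv ℝ H z (LC A) = 0 := hHc.unique (hasDerivAt_const 0 (H z))
  rw [inner_gradient]
  exact hzero


lemma base_J {G : Set (Matrix (Fin n) (Fin n) ℝ)}
    (hGmul : ∀ g ∈ G, ∀ g' ∈ G, g * g' ∈ G)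
    {z : Vn n} (hz : z ∈ Omega0 G) {A B : Matrix (Fin n) (Fin n) ℝ}
    (hA : A ∈ lieAlg G) (hB : B ∈ lieAlg G) :
    ⟪act (JM n) (act (rhoM A) z), act (rhoM B) z⟫ = 0 := by
  have e1 : ⟪act (JM n) (act (rhoM A) z), act (rhoM B) z⟫
      = ⟪act (rhoM A) z, act (JM n)ᵀ (act (rhoM B) z)⟫ := inner_act _ _ _
  have e2 : ⟪act (rhoM A) z, act (JM n)ᵀ (act (rhoM B) z)⟫
      = ⟪z, act (rhoM A)ᵀ (act (JM n)ᵀ (act (rhoM B) z))⟫ := inner_act _ _ _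
  have e3 : act (rhoM A)ᵀ (act (JM n)ᵀ (act (rhoM B) z))
      = act ((rhoM A)ᵀ * ((JM n)ᵀ * rhoM B)) z := by
    rw [act_mul, act_mul]
  have e4 : (rhoM A)ᵀ * ((JM n)ᵀ * rhoM B) = JM n * rhoM (A * B) := by
    rw [rhoM_transpose, hA.1, rhoM_neg, JM_transpose, neg_mul, neg_mul, mul_neg,
      neg_neg, ← mul_assoc, rhoM_JM_comm, mul_assoc, rhoM_mul]
  rw [e1, e2, e3, e4, act_mul]
  exact momentum_mul_zero hGmul hz hA hB

lemma hJJ_inner (u v : Vn n) : ⟪act (JM n) u, act (JM n) v⟫ = ⟪u, v⟫ := by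
  rw [inner_act, ← act_mul, JM_transpose, neg_mul, JM_mul_JM, neg_neg, act_one]

theorem orthogonal_decomposition_at_Omega0 {n : ℕ}
    (G : Set (Matrix (Fin n) (Fin n) ℝ))
    (hGO : ∀ g ∈ G, g ∈ Matrix.orthogonalGroup (Fin n) ℝ)
    (hG1 : (1 : Matrix (Fin n) (Fin n) ℝ) ∈ G)
    (hGmul : ∀ g ∈ G, ∀ g' ∈ G, g * g' ∈ G)
    (hGinv : ∀ g ∈ G, g⁻¹ ∈ G)
    (H : Vn n → ℝ) (hH : Differentiable ℝ H)
    (hHinv : ∀ g ∈ G, ∀ z : Vn n, H (act (rhoM g) z) = H z) :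
    ∀ z ∈ Omega0 G,
      ∀ v₁ ∈ Submodule.span ℝ {gradient H z} ⊔ Submodule.map (act (JM n)) (gSp G z),
      ∀ v₂ ∈ Submodule.span ℝ {act (JM n) (gradient H z)} ⊔ gSp G z,
      ⟪v₁, v₂⟫ = 0 := by
  intro z hz v₁ hv₁ v₂ hv₂
  obtain ⟨a, ha, b, hb, rfl⟩ := Submodule.mem_sup.mp hv₁
  obtain ⟨c, hc, d, hd, rfl⟩ := Submodule.mem_sup.mp hv₂
  obtain ⟨r, rfl⟩ := Submodule.mem_span_singleton.mp ha
  obtain ⟨s, rfl⟩ := Submodule.mem_span_singleton.mp hc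
  obtain ⟨w, hw, rfl⟩ := Submodule.mem_map.mp hb
  have hgrad : ∀ u ∈ gSp G z, ⟪gradient H z, u⟫ = 0 := by
    have hbase : ∀ s ∈ {v : Vn n | ∃ A ∈ lieAlg G, v = act (rhoM A) z},
        (innerₛₗ ℝ (gradient H z)) s = 0 := by
      rintro s ⟨A, hA, rfl⟩
      simpa only [innerₛₗ_apply_apply] using grad_inner_orbit H hH hHinv z hA
    intro u hu
    simpa only [innerₛₗ_apply_apply] using span_apply_zero _ hbase u hu
  have hJgen : ∀ A ∈ lieAlg G, ∀ d' ∈ gSp G z,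
      ⟪act (JM n) (act (rhoM A) z), d'⟫ = 0 := by
    intro A hA
    have hbase : ∀ s ∈ {v : Vn n | ∃ B ∈ lieAlg G, v = act (rhoM B) z},
        (innerₛₗ ℝ (act (JM n) (act (rhoM A) z))) s = 0 := by
      rintro s ⟨B, hB, rfl⟩
      simpa only [innerₛₗ_apply_apply] using base_J hGmul hz hA hB
    intro d' hd'
    simpa only [innerₛₗ_apply_apply] using span_apply_zero _ hbase d' hd'
  have hJorb : ∀ d' ∈ gSp G z, ∀ u ∈ gSp G z, ⟪act (JM n) u, d'⟫ = 0 := by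
    intro d' hd'
    have hbase : ∀ s ∈ {v : Vn n | ∃ A ∈ lieAlg G, v = act (rhoM A) z},
        ((innerₛₗ ℝ d').comp (act (JM n))) s = 0 := by
      rintro s ⟨A, hA, rfl⟩
      have h1 := hJgen A hA d' hd'
      simp only [LinearMap.comp_apply, innerₛₗ_apply_apply]
      rw [real_inner_comm]
      exact h1
    intro u hu
    have h := span_apply_zero _ hbase u hu
    simp only [LinearMap.comp_apply, innerₛₗ_apply_apply] at h
    rw [real_inner_comm]
    exact h
  have z1 : ⟪gradient H z, act (JM n) (gradient H z)⟫ = 0 := inner_act_JM_self _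
  have z2 : ⟪gradient H z, d⟫ = 0 := hgrad d hd
  have z3 : ⟪act (JM n) w, act (JM n) (gradient H z)⟫ = 0 := by
    rw [hJJ_inner, real_inner_comm]
    exact hgrad w hw
  have z4 : ⟪act (JM n) w, d⟫ = 0 := hJorb d hd w hw
  simp only [inner_add_left, inner_add_right, real_inner_smul_left, real_inner_smul_right,
    z1, z2, z3, z4, mul_zero, add_zero, zero_add]


end
end
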